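/- For a 3×3 real skew-symmetric matrix F with F² = diag(0, -λ², -λ²) for some λ ∈ ℝ, we have F = ⋆((λ,0,0)) or F = -⋆((λ,0,0)). -/

import Mathlib

open Matrix

def hat (ω : Fin 3 → ℝ) : Matrix (Fin 3) (Fin 3) ℝ :=
  !![0, -ω 2, ω 1; ω 2, 0, -ω 0; -ω 1, ω 0, 0]

theorem stmt12 (F : Matrix (Fin 3) (Fin 3) ℝ) (hskew : Fᵀ = -F) (lam : ℝ)
    (hsq : F * F = Matrix.diagonal ![0, -lam ^ 2, -lam ^ 2]) :
    F = hat ![lam, 0, 0] ∨ F = -hat ![lam, 0, 0] := by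
  have hs := fun i j => congrFun (congrFun hskew i) j
  simp only [transpose_apply, Matrix.neg_apply] at hs
  have h00 : F 0 0 = 0 := by have := hs 0 0; linarith
  have h11 : F 1 1 = 0 := by have := hs 1 1; linarith
  have h22 : F 2 2 = 0 := by have := hs 2 2; linarith
  have hm := fun i j => congrFun (congrFun hsq i) j
  simp only [mul_apply, Fin.sum_univ_three, Matrix.diagonal, of_apply] at hm
  have d0 := hm 0 0
  have d1 := hm 1 1
  norm_num at d0 d1
  have h10 := hs 0 1
  have h20 := hs 0 2
  have h21 := hs 1 2
  rw [h00, h10, h20] at d0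
  have h01 : F 0 1 = 0 := by nlinarith [mul_self_nonneg (F 0 1), mul_self_nonneg (F 0 2)]
  have h02 : F 0 2 = 0 := by nlinarith [mul_self_nonneg (F 0 1), mul_self_nonneg (F 0 2)]
  have h10' : F 1 0 = 0 := by rw [h10, h01, neg_zero]
  have h20' : F 2 0 = 0 := by rw [h20, h02, neg_zero]
  have hsq12 : F 1 2 ^ 2 = lam ^ 2 := by rw [h10', h11, h21] at d1; nlinarith
  have : (F 1 2 - (-lam)) * (F 1 2 - lam) = 0 := by ring_nf; nlinarith
  rcases mul_eq_zero.mp this with h | h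
  · left
    have h12 : F 1 2 = -lam := by linarith
    have h21' : F 2 1 = lam := by rw [h21, h12, neg_neg]
    ext i j
    fin_cases i <;> fin_cases j <;>
      simp [hat, h00, h01, h02, h10', h11, h12, h20', h21', h22, Matrix.vecHead, Matrix.vecTail]
  · right
    have h12 : F 1 2 = lam := by linarith
    have h21' : F 2 1 = -lam := by rw [h21, h12]
    ext i j
    fin_cases i <;> fin_cases j <;>
      simp [hat, h00, h01, h02, h10', h11, h12, h20', h21', h22, Matrix.vecHead, Matrix.vecTail]
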